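/- For c > 0, the function Q(θ) = c(2(e^{-θ} - 1) + 2√(1 - e^θ)e^{-θ}) (i.e., γ = 2) is convex on (-∞, ln(2(√2-1))] and concave on (ln(2(√2-1)), 0]. -/

import Mathlib

open Real Set

noncomputable def D1 (c θ : ℝ) : ℝ :=
  -c * (2 * Real.exp (-θ) + (Real.sqrt (1 - Real.exp θ))⁻¹ +
    2 * Real.sqrt (1 - Real.exp θ) * Real.exp (-θ))

noncomputable def D2 (c θ : ℝ) : ℝ :=
  -c * (-2 * Real.exp (-θ) + Real.exp θ / (2 * (Real.sqrt (1 - Real.exp θ))^3) -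
    (Real.sqrt (1 - Real.exp θ))⁻¹ - 2 * Real.sqrt (1 - Real.exp θ) * Real.exp (-θ))

lemma hasDerivAt_s {θ : ℝ} (h : Real.exp θ < 1) :
    HasDerivAt (fun t => Real.sqrt (1 - Real.exp t))
      (-Real.exp θ / (2 * Real.sqrt (1 - Real.exp θ))) θ := by
  have h1 : (0:ℝ) < 1 - Real.exp θ := by linarith
  have := (Real.hasDerivAt_sqrt (ne_of_gt h1)).comp θ
    ((hasDerivAt_const θ (1:ℝ)).sub (Real.hasDerivAt_exp θ))
  refine this.congr_deriv ?_
  field_simp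
  ring

lemma hasDerivAt_Q (c : ℝ) {θ : ℝ} (h : Real.exp θ < 1) :
    HasDerivAt (fun t =>
      c * (2 * (Real.exp (-t) - 1) + 2 * Real.sqrt (1 - Real.exp t) * Real.exp (-t)))
      (D1 c θ) θ := by
  have h1 : (0:ℝ) < 1 - Real.exp θ := by linarith
  have hs : (0:ℝ) < Real.sqrt (1 - Real.exp θ) := Real.sqrt_pos.mpr h1
  have hexp : HasDerivAt (fun t : ℝ => Real.exp (-t)) (-Real.exp (-θ)) θ := by
    have := (Real.hasDerivAt_exp (-θ)).comp θ (hasDerivAt_neg θ)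
    exact this.congr_deriv (by simp)
  have hmain := ((((hexp.sub_const 1).const_mul 2).add
      ((((hasDerivAt_s h).const_mul 2).mul hexp))).const_mul c)
  refine hmain.congr_deriv ?_
  simp only [D1]
  set s := Real.sqrt (1 - Real.exp θ) with hsdef
  have hsq : s^2 = 1 - Real.exp θ := Real.sq_sqrt h1.le
  have hu : Real.exp θ = 1 - s^2 := by linarith
  have he : Real.exp (-θ) = (1 - s^2)⁻¹ := by rw [Real.exp_neg, hu]
  have hne : 1 - s^2 ≠ 0 := by rw [← hu]; exact (Real.exp_pos θ).ne'
  have hsne : s ≠ 0 := ne_of_gt hs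
  rw [hu, he]
  field_simp
  ring

lemma hasDerivAt_D1 (c : ℝ) {θ : ℝ} (h : Real.exp θ < 1) :
    HasDerivAt (D1 c) (D2 c θ) θ := by
  have h1 : (0:ℝ) < 1 - Real.exp θ := by linarith
  have hs : (0:ℝ) < Real.sqrt (1 - Real.exp θ) := Real.sqrt_pos.mpr h1
  have hexp : HasDerivAt (fun t : ℝ => Real.exp (-t)) (-Real.exp (-θ)) θ := by
    have := (Real.hasDerivAt_exp (-θ)).comp θ (hasDerivAt_neg θ)
    exact this.congr_deriv (by simp)
  have hinv : HasDerivAt (fun t => (Real.sqrt (1 - Real.exp t))⁻¹)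
      (-(-Real.exp θ / (2 * Real.sqrt (1 - Real.exp θ))) / (Real.sqrt (1 - Real.exp θ))^2) θ :=
    (hasDerivAt_s h).inv (ne_of_gt hs)
  have hmain := ((((hexp.const_mul 2).add hinv).add
      (((hasDerivAt_s h).const_mul 2).mul hexp)).const_mul (-c))
  refine hmain.congr_deriv ?_
  simp only [D2]
  set s := Real.sqrt (1 - Real.exp θ) with hsdef
  have hsq : s^2 = 1 - Real.exp θ := Real.sq_sqrt h1.le
  have hu : Real.exp θ = 1 - s^2 := by linarith
  have he : Real.exp (-θ) = (1 - s^2)⁻¹ := by rw [Real.exp_neg, hu]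
  have hne : 1 - s^2 ≠ 0 := by rw [← hu]; exact (Real.exp_pos θ).ne'
  have hsne : s ≠ 0 := ne_of_gt hs
  rw [hu, he]
  field_simp
  ring

lemma sqrt2_facts : 1 < Real.sqrt 2 ∧ Real.sqrt 2 < 1.5 := by
  have h2 : Real.sqrt 2 ^ 2 = 2 := Real.sq_sqrt (by norm_num)
  have h0 : 0 ≤ Real.sqrt 2 := Real.sqrt_nonneg 2
  constructor <;> nlinarith

lemma D2_eq (c : ℝ) {θ : ℝ} (h : Real.exp θ < 1) :
    D2 c θ = c * ((Real.sqrt (1 - Real.exp θ))^4 + 4*(Real.sqrt (1 - Real.exp θ))^3 +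
      4*(Real.sqrt (1 - Real.exp θ))^2 - 1) /
      (2*(Real.sqrt (1 - Real.exp θ))^3*(1-(Real.sqrt (1 - Real.exp θ))^2)) := by
  have h1 : (0:ℝ) < 1 - Real.exp θ := by linarith
  have hs : (0:ℝ) < Real.sqrt (1 - Real.exp θ) := Real.sqrt_pos.mpr h1
  simp only [D2]
  set s := Real.sqrt (1 - Real.exp θ) with hsdef
  have hsq : s^2 = 1 - Real.exp θ := Real.sq_sqrt h1.le
  have hu : Real.exp θ = 1 - s^2 := by linarith
  have he : Real.exp (-θ) = (1 - s^2)⁻¹ := by rw [Real.exp_neg, hu]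
  have hne : 1 - s^2 ≠ 0 := by rw [← hu]; exact (Real.exp_pos θ).ne'
  have hsne : s ≠ 0 := ne_of_gt hs
  rw [hu, he]
  field_simp
  ring

lemma D2_nonneg (c : ℝ) (hc : 0 < c) {θ : ℝ}
    (h : Real.exp θ < 2 * (Real.sqrt 2 - 1)) : 0 ≤ D2 c θ := by
  obtain ⟨hs1, hs2⟩ := sqrt2_facts
  have h2 : Real.sqrt 2 ^ 2 = 2 := Real.sq_sqrt (by norm_num)
  have hlt1 : Real.exp θ < 1 := by nlinarith
  have h1 : (0:ℝ) < 1 - Real.exp θ := by linarith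
  have hs : (0:ℝ) < Real.sqrt (1 - Real.exp θ) := Real.sqrt_pos.mpr h1
  rw [D2_eq c hlt1]
  set s := Real.sqrt (1 - Real.exp θ) with hsdef
  have hsq : s^2 = 1 - Real.exp θ := Real.sq_sqrt h1.le
  have hslt1 : s < 1 := by nlinarith [Real.exp_pos θ]
  have hkey : Real.sqrt 2 - 1 < s := by nlinarith
  have hnum : 0 ≤ s^4 + 4*s^3 + 4*s^2 - 1 := by nlinarith [sq_nonneg (s+1)]
  have hden : 0 < 2*s^3*(1-s^2) :=
    mul_pos (by positivity) (by linarith [Real.exp_pos θ])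
  positivity

lemma D2_nonpos (c : ℝ) (hc : 0 < c) {θ : ℝ}
    (h : 2 * (Real.sqrt 2 - 1) < Real.exp θ) (hlt1 : Real.exp θ < 1) : D2 c θ ≤ 0 := by
  obtain ⟨hs1, hs2⟩ := sqrt2_facts
  have h2 : Real.sqrt 2 ^ 2 = 2 := Real.sq_sqrt (by norm_num)
  have h1 : (0:ℝ) < 1 - Real.exp θ := by linarith
  have hs : (0:ℝ) < Real.sqrt (1 - Real.exp θ) := Real.sqrt_pos.mpr h1
  rw [D2_eq c hlt1]
  set s := Real.sqrt (1 - Real.exp θ) with hsdef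
  have hsq : s^2 = 1 - Real.exp θ := Real.sq_sqrt h1.le
  have hslt1 : s < 1 := by nlinarith [Real.exp_pos θ]
  have hkey : s < Real.sqrt 2 - 1 := by nlinarith
  have hnum : s^4 + 4*s^3 + 4*s^2 - 1 ≤ 0 := by nlinarith [sq_nonneg (s+1)]
  have hden : 0 < 2*s^3*(1-s^2) :=
    mul_pos (by positivity) (by linarith [Real.exp_pos θ])
  exact div_nonpos_iff.mpr (Or.inr ⟨by nlinarith, hden.le⟩)

theorem stmt_17 (c : ℝ) (hc : 0 < c) :
    let Q : ℝ → ℝ := fun θ =>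
      c * (2 * (Real.exp (-θ) - 1) + 2 * Real.sqrt (1 - Real.exp θ) * Real.exp (-θ))
    ConvexOn ℝ (Set.Iic (Real.log (2 * (Real.sqrt 2 - 1)))) Q ∧
      ConcaveOn ℝ (Set.Ioc (Real.log (2 * (Real.sqrt 2 - 1))) 0) Q := by
  intro Q
  obtain ⟨hs1, hs2⟩ := sqrt2_facts
  have hpos : (0:ℝ) < 2 * (Real.sqrt 2 - 1) := by nlinarith
  have hlt1 : 2 * (Real.sqrt 2 - 1) < 1 := by nlinarith
  have hL0 : Real.log (2 * (Real.sqrt 2 - 1)) < 0 := Real.log_neg hpos hlt1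
  have hexpL : Real.exp (Real.log (2 * (Real.sqrt 2 - 1))) = 2 * (Real.sqrt 2 - 1) :=
    Real.exp_log hpos
  have hcont : Continuous Q := by
    apply continuous_const.mul
    apply Continuous.add
    · fun_prop
    · exact ((continuous_const.mul (Real.continuous_sqrt.comp
        (continuous_const.sub Real.continuous_exp))).mul (Real.continuous_exp.comp continuous_neg))
  constructor
  · refine convexOn_of_hasDerivWithinAt2_nonneg (f' := D1 c) (f'' := D2 c)
      (convex_Iic _) hcont.continuousOn ?_ ?_ ?_
    · rw [interior_Iic]
      intro x hx
      have hx1 : Real.exp x < 1 := by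
        calc Real.exp x < Real.exp (Real.log (2 * (Real.sqrt 2 - 1))) := Real.exp_lt_exp.mpr hx
        _ = 2 * (Real.sqrt 2 - 1) := hexpL
        _ < 1 := hlt1
      exact (hasDerivAt_Q c hx1).hasDerivWithinAt
    · rw [interior_Iic]
      intro x hx
      have hx1 : Real.exp x < 1 := by
        calc Real.exp x < Real.exp (Real.log (2 * (Real.sqrt 2 - 1))) := Real.exp_lt_exp.mpr hx
        _ = 2 * (Real.sqrt 2 - 1) := hexpL
        _ < 1 := hlt1
      exact (hasDerivAt_D1 c hx1).hasDerivWithinAt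
    · rw [interior_Iic]
      intro x hx
      have hxl : Real.exp x < 2 * (Real.sqrt 2 - 1) := by
        calc Real.exp x < Real.exp (Real.log (2 * (Real.sqrt 2 - 1))) := Real.exp_lt_exp.mpr hx
        _ = 2 * (Real.sqrt 2 - 1) := hexpL
      exact D2_nonneg c hc hxl
  · refine concaveOn_of_hasDerivWithinAt2_nonpos (f' := D1 c) (f'' := D2 c)
      (convex_Ioc _ _) hcont.continuousOn ?_ ?_ ?_
    · rw [interior_Ioc]
      intro x hx
      have hx1 : Real.exp x < 1 := by
        calc Real.exp x < Real.exp 0 := Real.exp_lt_exp.mpr hx.2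
        _ = 1 := Real.exp_zero
      exact (hasDerivAt_Q c hx1).hasDerivWithinAt
    · rw [interior_Ioc]
      intro x hx
      have hx1 : Real.exp x < 1 := by
        calc Real.exp x < Real.exp 0 := Real.exp_lt_exp.mpr hx.2
        _ = 1 := Real.exp_zero
      exact (hasDerivAt_D1 c hx1).hasDerivWithinAt
    · rw [interior_Ioc]
      intro x hx
      have hx1 : Real.exp x < 1 := by
        calc Real.exp x < Real.exp 0 := Real.exp_lt_exp.mpr hx.2
        _ = 1 := Real.exp_zero
      have hxl : 2 * (Real.sqrt 2 - 1) < Real.exp x := by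
        calc 2 * (Real.sqrt 2 - 1) = Real.exp (Real.log (2 * (Real.sqrt 2 - 1))) := hexpL.symm
        _ < Real.exp x := Real.exp_lt_exp.mpr hx.1
      exact D2_nonpos c hc hxl hx1
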